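/- arXiv:1304.1996 — 2 statements merged into one kernel-verified Lean document; each statement's English description precedes it below -/
import Mathlib

section
/- Let d ≥ 2 and let x_d be the unique root of x^d - x^{d-1} - 1 in (1, ∞). Then the sequence (x_d) tends to 1 as d → ∞. -/
/-- If for each `d ≥ 2`, `x d` is the (unique) root of `x^d - x^(d-1) - 1` in `(1, ∞)`,
then `x d → 1` as `d → ∞`. -/
theorem root_tendsto_one (x : ℕ → ℝ)
    (hx : ∀ d : ℕ, 2 ≤ d → 1 < x d ∧ (x d) ^ d - (x d) ^ (d - 1) - 1 = 0) :
    Filter.Tendsto x Filter.atTop (nhds 1) := by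
  rw [Metric.tendsto_atTop]
  intro ε hε
  obtain ⟨N, hN⟩ := exists_nat_gt (1 / ε ^ 2)
  refine ⟨N + 2, fun d hd => ?_⟩
  obtain ⟨h1, h2⟩ := hx d (by omega)
  set y := x d with hy_def
  have hpow : y ^ d = y ^ (d - 1) * y := by
    rw [← pow_succ]; congr 1; omega
  have hy : y ^ (d - 1) * (y - 1) = 1 := by nlinarith [hpow]
  have hb : 1 + ((d - 1 : ℕ) : ℝ) * (y - 1) ≤ y ^ (d - 1) := by
    have := one_add_mul_le_pow (a := y - 1) (by linarith) (d - 1)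
    simpa using this
  have hcast : ((d - 1 : ℕ) : ℝ) = (d : ℝ) - 1 := by
    have h1d : 1 ≤ d := by omega
    push_cast [Nat.cast_sub h1d]; ring
  rw [hcast] at hb
  have hdy : ((d : ℝ) - 1) * (y - 1) ^ 2 ≤ 1 := by nlinarith [hy, hb, h1]
  have hdN : (1 / ε ^ 2 : ℝ) < (d : ℝ) - 1 := by
    have : (N : ℝ) + 1 ≤ (d : ℝ) - 1 := by
      have : (N : ℝ) + 2 ≤ (d : ℝ) := by exact_mod_cast hd
      linarith
    linarith
  have hε2 : (0:ℝ) < ε ^ 2 := by positivity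
  have hsq : (y - 1) ^ 2 < ε ^ 2 := by
    have h1' : 1 / ε ^ 2 * ε ^ 2 = 1 := by field_simp
    nlinarith [hdy, hdN, hε2, sq_nonneg (y - 1)]
  have : y - 1 < ε := by nlinarith [hsq, hε]
  have : dist y 1 = y - 1 := by
    rw [Real.dist_eq, abs_of_pos (by linarith)]
  linarith [this]
end

section
/- Let T be a finite binary rooted tree in which each root-to-leaf path contains at most m left-edges and at most L right-edges. Then the number of leaves of T is at most ∑_{ℓ=0}^{L} C(m+ℓ, ℓ). -/
/-- A finite binary rooted tree: a leaf, or an internal node with a left and a right child. -/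
inductive BTree where
  | leaf : BTree
  | node (l r : BTree) : BTree

/-- Number of leaves of a binary tree. -/
def BTree.leaves : BTree → ℕ
  | .leaf => 1
  | .node l r => l.leaves + r.leaves

/-- Every root-to-leaf path of the tree uses at most `m` left-edges and at most `L` right-edges. -/
def BTree.Bounded : BTree → ℕ → ℕ → Prop
  | .leaf, _, _ => True
  | .node l r, m, L => 0 < m ∧ 0 < L ∧ BTree.Bounded l (m - 1) L ∧ BTree.Bounded r m (L - 1)

lemma sum_choose_eq (m L : ℕ) :
    ∑ ℓ ∈ Finset.range (L + 1), Nat.choose (m + ℓ) ℓ = Nat.choose (m + L + 1) L := by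
  induction L with
  | zero => simp
  | succ n ih =>
    rw [Finset.sum_range_succ, ih]
    have : m + (n + 1) + 1 = (m + n + 1) + 1 := by ring
    have e : m + (n + 1) = m + n + 1 := by ring
    rw [this, e, Nat.choose_succ_succ (m + n + 1) n]

/-- If each root-to-leaf path of a binary tree contains at most `m` left-edges and at most
`L` right-edges, then the number of leaves is at most `∑_{ℓ=0}^{L} C(m+ℓ, ℓ)`. -/
theorem leaves_le_sum_choose (T : BTree) (m L : ℕ) (h : T.Bounded m L) :
    T.leaves ≤ ∑ ℓ ∈ Finset.range (L + 1), Nat.choose (m + ℓ) ℓ := by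
  induction T generalizing m L with
  | leaf =>
    show 1 ≤ _
    calc 1 = Nat.choose (m + 0) 0 := by simp
      _ ≤ _ := Finset.single_le_sum (f := fun ℓ => Nat.choose (m + ℓ) ℓ)
        (fun i _ => Nat.zero_le _) (Finset.mem_range.mpr (Nat.succ_pos L))
  | node l r ihl ihr =>
    obtain ⟨hm, hL, hl, hr⟩ := h
    have h1 := ihl (m - 1) L hl
    have h2 := ihr m (L - 1) hr
    rw [sum_choose_eq] at *
    have e1 : m - 1 + L + 1 = m + L := by omega
    have e2 : m + (L - 1) + 1 = m + L := by omega
    rw [e1] at h1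
    rw [e2] at h2
    have key : Nat.choose (m + L) L + Nat.choose (m + L) (L - 1) = Nat.choose (m + L + 1) L := by
      obtain ⟨L', rfl⟩ : ∃ L', L = L' + 1 := ⟨L - 1, by omega⟩
      rw [Nat.choose_succ_succ (m + (L' + 1)) L']
      simp [Nat.add_comm]
    simp only [BTree.leaves]
    omega
end
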